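/- Let n ≥ 2 and δ > 0. Let B : ℝ → ℂ^{n×n} be a differentiable family of Hermitian matrices such that for every θ the largest eigenvalue is simple with uniform spectral gap λ₁(B(θ)) − λ₂(B(θ)) ≥ δ, where λ₁ and λ₂ denote the largest and second largest eigenvalues. Let v : ℝ → ℂⁿ be differentiable with ‖v(θ)‖ = 1 and B(θ)·v(θ) = λ₁(B(θ))·v(θ) for every θ, and set P(θ) = v(θ)·v(θ)*. Then ‖P′(θ)‖ ≤ 2‖B′(θ)‖/δ for every θ. -/

import Mathlib

open Matrix
open scoped Real Matrix.Norms.L2Operator ComplexOrder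

/-- The `r`-th largest value (1-indexed, counted with multiplicity) of a finite family of reals. -/
noncomputable def nthLargest {m : ℕ} (f : Fin m → ℝ) (r : ℕ) : ℝ :=
  (((Finset.univ.val.map f).sort (· ≤ ·)).reverse).getD (r - 1) 0

/-- The `r`-th largest eigenvalue (1-indexed, counted with multiplicity) of a Hermitian matrix
(junk value `0` if the matrix is not Hermitian). -/
noncomputable def eigsDesc {n : ℕ} (A : Matrix (Fin n) (Fin n) ℂ) (r : ℕ) : ℝ :=
  if h : A.IsHermitian then nthLargest h.eigenvalues r else 0


section comb
variable {m : ℕ} (f : Fin m → ℝ)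

private lemma len_sort : ((Finset.univ.val.map f).sort (· ≤ ·)).length = m := by
  rw [Multiset.length_sort]; simp

lemma le_nthLargest_one (hm : 0 < m) (i : Fin m) : f i ≤ nthLargest f 1 := by
  set L := (Finset.univ.val.map f).sort (· ≤ ·) with hL
  have hlen : L.length = m := len_sort f
  have hmem : f i ∈ L := by
    rw [hL, Multiset.mem_sort]; exact Multiset.mem_map_of_mem f (Finset.mem_univ_val i)
  obtain ⟨k, hk, hget⟩ := List.getElem_of_mem hmem
  have h1 : nthLargest f 1 = L[m-1]'(by omega) := by
    unfold nthLargest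
    rw [← hL, List.getD_eq_getElem _ _ (by rw [List.length_reverse]; omega),
      List.getElem_reverse]
    congr 1; omega
  rw [h1, ← hget]
  have hsorted : L.Pairwise (· ≤ ·) := Multiset.pairwise_sort _ _
  have := hsorted.rel_get_of_le
    (a := ⟨k, hk⟩) (b := ⟨m-1, by omega⟩)
    (by simp only [Fin.mk_le_mk]; omega)
  simpa using this

lemma exists_eq_nthLargest_one (hm : 0 < m) : ∃ i, f i = nthLargest f 1 := by
  set L := (Finset.univ.val.map f).sort (· ≤ ·) with hL
  have hlen : L.length = m := len_sort f
  have h1 : nthLargest f 1 = L[m-1]'(by omega) := by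
    unfold nthLargest
    rw [← hL, List.getD_eq_getElem _ _ (by rw [List.length_reverse]; omega),
      List.getElem_reverse]
    congr 1; omega
  have hmem : L[m-1]'(by omega) ∈ Finset.univ.val.map f := by
    rw [← Multiset.mem_sort (α := ℝ) (· ≤ ·), ← hL]; exact List.getElem_mem _
  obtain ⟨i, _, hi⟩ := Multiset.mem_map.mp hmem
  exact ⟨i, by rw [h1, hi]⟩

lemma eq_of_gt_nthLargest_two (hm : 2 ≤ m) {i j : Fin m}
    (hi : nthLargest f 2 < f i) (hj : nthLargest f 2 < f j) : i = j := by
  set L := (Finset.univ.val.map f).sort (· ≤ ·) with hL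
  have hlen : L.length = m := len_sort f
  have hsorted : L.Pairwise (· ≤ ·) := Multiset.pairwise_sort _ _
  have h2 : nthLargest f 2 = L[m-2]'(by omega) := by
    unfold nthLargest
    rw [← hL, List.getD_eq_getElem _ _ (by rw [List.length_reverse]; omega),
      List.getElem_reverse]
    congr 1; omega
  set c := nthLargest f 2 with hc
  -- count of elements > c in L is ≤ 1
  have hcount : L.countP (fun x => decide (c < x)) ≤ 1 := by
    have hsplit : L = L.take (m-1) ++ L.drop (m-1) := (List.take_append_drop _ _).symm
    have htake : (L.take (m-1)).countP (fun x => decide (c < x)) = 0 := by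
      rw [List.countP_eq_zero]
      intro a ha
      obtain ⟨k, hk, hget⟩ := List.getElem_of_mem ha
      rw [List.getElem_take] at hget
      have hkm : k < m - 1 := by
        rw [List.length_take, hlen] at hk; omega
      have hle : L[k]'(by omega) ≤ L[m-2]'(by omega) := by
        have := hsorted.rel_get_of_le (a := ⟨k, by omega⟩) (b := ⟨m-2, by omega⟩)
          (by simp only [Fin.mk_le_mk]; omega)
        simpa using this
      simp only [decide_eq_true_eq, not_lt]
      rw [← hget, h2]; exact hle
    have hdrop : (L.drop (m-1)).countP (fun x => decide (c < x)) ≤ 1 := by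
      calc (L.drop (m-1)).countP (fun x => decide (c < x)) ≤ (L.drop (m-1)).length :=
            List.countP_le_length
        _ = 1 := by rw [List.length_drop, hlen]; omega
    calc L.countP (fun x => decide (c < x))
        = (L.take (m-1)).countP _ + (L.drop (m-1)).countP _ := by
          conv_lhs => rw [hsplit]
          exact List.countP_append
      _ ≤ 1 := by omega
  have hfil : (Finset.univ.filter (fun i : Fin m => c < f i)).card ≤ 1 := by
    have : (Finset.univ.filter (fun i : Fin m => c < f i)).card
        = Multiset.countP (fun x => c < x) (Finset.univ.val.map f) := by
      rw [Multiset.countP_map]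
      rfl
    rw [this, ← Multiset.sort_eq (Finset.univ.val.map f) (· ≤ ·), Multiset.coe_countP, ← hL]
    exact hcount
  exact Finset.card_le_one.mp hfil i (Finset.mem_filter.mpr ⟨Finset.mem_univ i, hi⟩)
    j (Finset.mem_filter.mpr ⟨Finset.mem_univ j, hj⟩)

end comb


noncomputable def toE {n : ℕ} : (Fin n → ℂ) → EuclideanSpace ℂ (Fin n) :=
  (WithLp.equiv 2 (Fin n → ℂ)).symm

lemma toE_apply {n : ℕ} (x : Fin n → ℂ) (i : Fin n) : toE x i = x i := rfl

lemma inner_toE {n : ℕ} (x y : Fin n → ℂ) :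
    inner (𝕜 := ℂ) (toE x) (toE y) = ∑ i, (starRingEnd ℂ) (x i) * y i := by
  simp [toE, PiLp.inner_apply, RCLike.inner_apply]
  exact Finset.sum_congr rfl fun i _ => mul_comm _ _

lemma toEuclideanLin_toE {n : ℕ} (A : Matrix (Fin n) (Fin n) ℂ) (x : Fin n → ℂ) :
    Matrix.toEuclideanLin A (toE x) = toE (A *ᵥ x) := rfl

lemma toE_smul {n : ℕ} (c : ℂ) (x : Fin n → ℂ) : toE (c • x) = c • toE x := rfl
lemma toE_sub {n : ℕ} (x y : Fin n → ℂ) : toE (x - y) = toE x - toE y := rfl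

lemma toE_norm_eq {n : ℕ} (x : Fin n → ℂ) :
    ‖toE x‖ = Real.sqrt (∑ i, ‖x i‖ ^ 2) := by
  rw [EuclideanSpace.norm_eq]
  simp [toE_apply]

lemma vecMulVec_opNorm_le {n : ℕ} (x y : Fin n → ℂ) :
    ‖vecMulVec x (star y)‖ ≤ ‖toE x‖ * ‖toE y‖ := by
  rw [Matrix.l2_opNorm_def]
  apply ContinuousLinearMap.opNorm_le_bound _ (mul_nonneg (norm_nonneg _) (norm_nonneg _))
  intro z
  have h1 : (LinearEquiv.trans Matrix.toEuclideanLin LinearMap.toContinuousLinearMap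
      (vecMulVec x (star y))) z
      = toE ((∑ j, (starRingEnd ℂ) (y j) * z j) • x) := by
    show toE (vecMulVec x (star y) *ᵥ (WithLp.equiv 2 (Fin n → ℂ)) z) = _
    congr 1
    funext i
    simp only [toE_apply, Matrix.mulVec, dotProduct, Matrix.vecMulVec_apply, Pi.star_apply,
      Pi.smul_apply, smul_eq_mul, RCLike.star_def, Finset.sum_mul, WithLp.equiv_apply]
    exact Finset.sum_congr rfl fun j _ => by show _ = (starRingEnd ℂ) (y j) * z j * x i; ring
  rw [h1, toE_smul, norm_smul]
  have h2 : ‖∑ j, (starRingEnd ℂ) (y j) * z j‖ ≤ ‖toE y‖ * ‖z‖ := by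
    have h3 : (∑ j, (starRingEnd ℂ) (y j) * z j) = inner (𝕜 := ℂ) (toE y) z := by
      simp [toE, PiLp.inner_apply, RCLike.inner_apply]
      exact Finset.sum_congr rfl fun i _ => mul_comm _ _
    rw [h3]
    exact norm_inner_le_norm _ _
  calc ‖∑ j, (starRingEnd ℂ) (y j) * z j‖ * ‖toE x‖ ≤ (‖toE y‖ * ‖z‖) * ‖toE x‖ :=
        mul_le_mul_of_nonneg_right h2 (norm_nonneg _)
    _ = ‖toE x‖ * ‖toE y‖ * ‖z‖ := by ring

lemma toEuclideanLin_eigenBasis {n : ℕ} {A : Matrix (Fin n) (Fin n) ℂ} (hA : A.IsHermitian)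
    (i : Fin n) :
    Matrix.toEuclideanLin A (hA.eigenvectorBasis i)
      = ((hA.eigenvalues i : ℝ) : ℂ) • (hA.eigenvectorBasis i) := by
  ext1 j
  have := congrFun (hA.mulVec_eigenvectorBasis i) j
  simpa [Matrix.toEuclideanLin_apply, Complex.real_smul] using this


lemma gap_estimate {n : ℕ} {A : Matrix (Fin n) (Fin n) ℂ} (hA : A.IsHermitian)
    {δ lam lam2 : ℝ} (hδ : 0 < δ) (hd : lam2 + δ ≤ lam)
    (halt : ∀ i, hA.eigenvalues i = lam ∨ hA.eigenvalues i ≤ lam2)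
    {W : EuclideanSpace ℂ (Fin n)}
    (hperp : ∀ i, hA.eigenvalues i = lam →
      inner (𝕜 := ℂ) (hA.eigenvectorBasis i) W = 0) :
    δ * ‖W‖ ≤ ‖Matrix.toEuclideanLin A W - (lam : ℂ) • W‖ := by
  set E := hA.eigenvectorBasis with hE
  set y := Matrix.toEuclideanLin A W - (lam : ℂ) • W with hy
  have hTE : ∀ i, Matrix.toEuclideanLin A (E i) = ((hA.eigenvalues i : ℝ) : ℂ) • (E i) := by
    intro i
    ext1 j
    have := congrFun (hA.mulVec_eigenvectorBasis i) j
    simpa [Matrix.toEuclideanLin_apply, Complex.real_smul] using this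
  have hsym : (Matrix.toEuclideanLin A).IsSymmetric := Matrix.isHermitian_iff_isSymmetric.mp hA
  have hrepr : ∀ i, E.repr y i = ((hA.eigenvalues i - lam : ℝ) : ℂ) * E.repr W i := by
    intro i
    rw [OrthonormalBasis.repr_apply_apply, OrthonormalBasis.repr_apply_apply, hy,
      inner_sub_right, inner_smul_right, ← hsym (E i) W, hTE i, inner_smul_left]
    rw [Complex.conj_ofReal]
    push_cast
    ring
  have hnorm2 : ∀ (x : EuclideanSpace ℂ (Fin n)), ‖x‖^2 = ∑ i, ‖E.repr x i‖^2 := by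
    intro x
    rw [← E.repr.norm_map x, EuclideanSpace.norm_eq, Real.sq_sqrt]
    positivity
  have hterm : ∀ i, δ^2 * ‖E.repr W i‖^2 ≤ ‖E.repr y i‖^2 := by
    intro i
    rcases halt i with h | h
    · have : E.repr W i = 0 := by
        rw [OrthonormalBasis.repr_apply_apply]; exact hperp i h
      rw [this]
      simp [sq_nonneg]
    · rw [hrepr i, norm_mul, mul_pow]
      have h1 : δ ≤ ‖((hA.eigenvalues i - lam : ℝ) : ℂ)‖ := by
        rw [Complex.norm_real, Real.norm_eq_abs, abs_sub_comm, abs_of_nonneg (by linarith)]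
        linarith
      have h2 : δ^2 ≤ ‖((hA.eigenvalues i - lam : ℝ) : ℂ)‖^2 :=
        pow_le_pow_left₀ hδ.le h1 2
      exact mul_le_mul_of_nonneg_right h2 (sq_nonneg _)
  have hsum : δ^2 * ‖W‖^2 ≤ ‖y‖^2 := by
    rw [hnorm2 W, hnorm2 y, Finset.mul_sum]
    exact Finset.sum_le_sum fun i _ => hterm i
  have h1 : (δ * ‖W‖)^2 ≤ ‖y‖^2 := by rw [mul_pow]; exact hsum
  have h2 : 0 ≤ δ * ‖W‖ := mul_nonneg hδ.le (norm_nonneg _)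
  exact (pow_le_pow_iff_left₀ h2 (norm_nonneg _) two_ne_zero).mp h1


/-- First-derivative bound for the leading eigenprojection `P(θ) = v(θ)v(θ)*` of a differentiable
Hermitian family with uniform spectral gap `δ` between the two largest eigenvalues:
`‖P′(θ)‖ ≤ 2‖B′(θ)‖/δ` in operator norm. -/
theorem stmt_6
    (n : ℕ) (hn : 2 ≤ n) (δ : ℝ) (hδ : 0 < δ)
    (B B' : ℝ → Matrix (Fin n) (Fin n) ℂ)
    (v v' : ℝ → Fin n → ℂ)
    (P' : ℝ → Matrix (Fin n) (Fin n) ℂ)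
    (hB : ∀ θ i j, HasDerivAt (fun t => B t i j) (B' θ i j) θ)
    (hHerm : ∀ θ, (B θ).IsHermitian)
    (hgap : ∀ θ, δ ≤ eigsDesc (B θ) 1 - eigsDesc (B θ) 2)
    (hv : ∀ θ i, HasDerivAt (fun t => v t i) (v' θ i) θ)
    (hnorm : ∀ θ, ∑ i, ‖v θ i‖ ^ 2 = 1)
    (heig : ∀ θ, B θ *ᵥ v θ = ((eigsDesc (B θ) 1 : ℝ) : ℂ) • v θ)
    (hP' : ∀ θ i j,
      HasDerivAt (fun t => v t i * (starRingEnd ℂ) (v t j)) (P' θ i j) θ) :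
    ∀ θ, ‖P' θ‖ ≤ 2 * ‖B' θ‖ / δ := by
  intro θ
  have hA : (B θ).IsHermitian := hHerm θ
  set A := B θ with hAdef
  set μ : Fin n → ℝ := hA.eigenvalues with hμ
  set lam : ℝ := eigsDesc (B θ) 1 with hlam
  set lam2 : ℝ := eigsDesc (B θ) 2 with hlam2
  -- identification of eigsDesc with nthLargest
  have heigs : ∀ r, eigsDesc (B θ) r = nthLargest μ r := fun r => dif_pos hA
  -- normalization facts
  have hsum1 : ∀ t, ∑ i, (starRingEnd ℂ) (v t i) * v t i = 1 := by
    intro t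
    have : ∀ i, (starRingEnd ℂ) (v t i) * v t i = ((‖v t i‖ ^ 2 : ℝ) : ℂ) := by
      intro i
      rw [mul_comm, Complex.mul_conj]
      norm_cast
      exact (Complex.sq_norm _).symm
    rw [Finset.sum_congr rfl fun i _ => this i, ← Complex.ofReal_sum, hnorm t]
    norm_num
  -- the eigenvalue as a differentiable function
  set lamF : ℝ → ℂ := fun t => ∑ i, (starRingEnd ℂ) (v t i) * (B t *ᵥ v t) i with hlamF
  have hlamF_eq : ∀ t, lamF t = ((eigsDesc (B t) 1 : ℝ) : ℂ) := by
    intro t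
    rw [hlamF]
    simp only [heig t, Pi.smul_apply, smul_eq_mul]
    rw [Finset.sum_congr rfl fun i _ => (mul_left_comm _ _ _), ← Finset.mul_sum, hsum1 t,
      mul_one]
  have hDi : ∀ i, HasDerivAt (fun t => (B t *ᵥ v t) i)
      ((B' θ *ᵥ v θ + A *ᵥ v' θ) i) θ := by
    intro i
    have h1 : ∀ t, (B t *ᵥ v t) i = ∑ j, B t i j * v t j := fun t => rfl
    have h2 : (B' θ *ᵥ v θ + A *ᵥ v' θ) i
        = ∑ j, (B' θ i j * v θ j + B θ i j * v' θ j) := by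
      simp [Matrix.mulVec, dotProduct, Finset.sum_add_distrib]
      rfl
    rw [h2]
    simp only [h1]
    exact HasDerivAt.fun_sum fun j _ => (hB θ i j).mul (hv θ j)
  obtain ⟨l', hl'⟩ : ∃ l', HasDerivAt lamF l' θ :=
    ⟨_, HasDerivAt.fun_sum fun i _ => ((hv θ i).star.mul (hDi i))⟩
  set lc : ℂ := ((lam : ℝ) : ℂ) with hlc
  have hlamFθ : lamF θ = lc := hlamF_eq θ
  -- the differentiated eigenvalue equation
  have key2 : B' θ *ᵥ v θ + A *ᵥ v' θ = l' • v θ + lc • v' θ := by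
    funext i
    have hfun : (fun t => (B t *ᵥ v t) i) = fun t => lamF t * v t i := by
      funext t
      rw [heig t, hlamF_eq t, Pi.smul_apply, smul_eq_mul]
    have hrhs : HasDerivAt (fun t => lamF t * v t i) (l' * v θ i + lamF θ * v' θ i) θ :=
      hl'.mul (hv θ i)
    have := (hfun ▸ hDi i).unique hrhs
    simpa [hlamFθ] using this
  -- formula for P'
  have hP'eq : ∀ i j, P' θ i j
      = v' θ i * (starRingEnd ℂ) (v θ j) + v θ i * (starRingEnd ℂ) (v' θ j) := by
    intro i j
    exact (hP' θ i j).unique ((hv θ i).mul (hv θ j).star)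
  -- the coefficient a and the orthogonalized derivative w
  set a : ℂ := ∑ i, (starRingEnd ℂ) (v θ i) * v' θ i with ha
  have hstar_a : (starRingEnd ℂ) a + a = 0 := by
    have hconst : HasDerivAt (fun t => ∑ i, (starRingEnd ℂ) (v t i) * v t i)
        (∑ i, ((starRingEnd ℂ) (v' θ i) * v θ i + (starRingEnd ℂ) (v θ i) * v' θ i)) θ :=
      HasDerivAt.fun_sum fun i _ => ((hv θ i).star.mul (hv θ i))
    have hone : HasDerivAt (fun _ : ℝ => (1 : ℂ)) 0 θ := hasDerivAt_const θ 1
    have hfun : (fun t => ∑ i, (starRingEnd ℂ) (v t i) * v t i) = fun _ : ℝ => (1 : ℂ) := by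
      funext t; exact hsum1 t
    have h0 := (hfun ▸ hconst).unique hone
    have hsa : (starRingEnd ℂ) a = ∑ i, (starRingEnd ℂ) (v' θ i) * v θ i := by
      rw [ha, map_sum]
      exact Finset.sum_congr rfl fun i _ => by simp [mul_comm]
    rw [hsa, ha, ← Finset.sum_add_distrib] at *
    exact h0
  set w : Fin n → ℂ := v' θ - a • v θ with hw
  have hw_perp : ∑ i, (starRingEnd ℂ) (v θ i) * w i = 0 := by
    simp only [hw, Pi.sub_apply, Pi.smul_apply, smul_eq_mul, mul_sub,
      Finset.sum_sub_distrib]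
    rw [Finset.sum_congr rfl (fun i _ => by ring :
        ∀ i ∈ Finset.univ, (starRingEnd ℂ) (v θ i) * (a * v θ i)
          = a * ((starRingEnd ℂ) (v θ i) * v θ i)),
      ← Finset.mul_sum, hsum1 θ, mul_one, ← ha]
    ring
  -- the key vector identity
  have heigA : A *ᵥ v θ = lc • v θ := heig θ
  have hAw : A *ᵥ w - lc • w = l' • v θ - B' θ *ᵥ v θ := by
    have h1 : A *ᵥ w = A *ᵥ v' θ - a • (lc • v θ) := by
      rw [hw, Matrix.mulVec_sub, Matrix.mulVec_smul, heigA]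
    have h2 : A *ᵥ v' θ = l' • v θ + lc • v' θ - B' θ *ᵥ v θ := by
      rw [← key2]; abel
    rw [h1, h2, hw]
    funext i
    simp only [Pi.sub_apply, Pi.add_apply, Pi.smul_apply, smul_eq_mul]
    ring
  -- Euclidean space vectors
  set V : EuclideanSpace ℂ (Fin n) := toE (v θ) with hV
  set W : EuclideanSpace ℂ (Fin n) := toE w with hWdef
  have hVnorm : ‖V‖ = 1 := by
    rw [hV, toE_norm_eq, hnorm θ, Real.sqrt_one]
  have hgapθ := hgap θ
  have hlam2lt : lam2 < lam := by rw [hlam, hlam2]; linarith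
  have hd : lam2 + δ ≤ lam := by rw [hlam, hlam2]; linarith
  have h0n : 0 < n := by omega
  obtain ⟨i₀, hi₀⟩ := exists_eq_nthLargest_one μ h0n
  have hi₀lam : μ i₀ = lam := by rw [hi₀, hlam, heigs 1]
  have huniq : ∀ i j, μ i = lam → μ j = lam → i = j := by
    intro i j hi hj
    have hi' : nthLargest μ 2 < μ i := by rw [← heigs 2, ← hlam2, hi]; exact hlam2lt
    have hj' : nthLargest μ 2 < μ j := by rw [← heigs 2, ← hlam2, hj]; exact hlam2lt
    exact eq_of_gt_nthLargest_two μ hn hi' hj'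
  have halt : ∀ j, μ j = lam ∨ μ j ≤ lam2 := by
    intro j
    by_cases hle : μ j ≤ lam2
    · right; exact hle
    · left
      push_neg at hle
      have hj' : nthLargest μ 2 < μ j := by rw [← heigs 2, ← hlam2]; exact hle
      have hi' : nthLargest μ 2 < μ i₀ := by rw [← heigs 2, ← hlam2, hi₀lam]; exact hlam2lt
      rw [eq_of_gt_nthLargest_two μ hn hj' hi']
      exact hi₀lam
  have hsym : (Matrix.toEuclideanLin A).IsSymmetric := Matrix.isHermitian_iff_isSymmetric.mp hA
  have hTV : Matrix.toEuclideanLin A V = lc • V := by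
    rw [hV, toEuclideanLin_toE, heigA, toE_smul]
  have hEV : ∀ j, μ j ≠ lam → inner (𝕜 := ℂ) (hA.eigenvectorBasis j) V = 0 := by
    intro j hj
    have h1 : inner (𝕜 := ℂ) (hA.eigenvectorBasis j) (Matrix.toEuclideanLin A V)
        = lc * inner (𝕜 := ℂ) (hA.eigenvectorBasis j) V := by
      rw [hTV, inner_smul_right]
    have h2 : inner (𝕜 := ℂ) (hA.eigenvectorBasis j) (Matrix.toEuclideanLin A V)
        = ((μ j : ℝ) : ℂ) * inner (𝕜 := ℂ) (hA.eigenvectorBasis j) V := by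
      rw [← hsym (hA.eigenvectorBasis j) V, toEuclideanLin_eigenBasis hA j, inner_smul_left,
        Complex.conj_ofReal]
    have h3 : (((μ j : ℝ) : ℂ) - lc) * inner (𝕜 := ℂ) (hA.eigenvectorBasis j) V = 0 := by
      rw [sub_mul, ← h2, ← h1]
      ring
    have h4 : ((μ j : ℝ) : ℂ) - lc ≠ 0 := by
      rw [hlc, sub_ne_zero]
      exact_mod_cast hj
    exact (mul_eq_zero.mp h3).resolve_left h4
  have hVW : inner (𝕜 := ℂ) V W = 0 := by
    rw [hV, hWdef, inner_toE]; exact hw_perp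
  have hperp : ∀ i, μ i = lam → inner (𝕜 := ℂ) (hA.eigenvectorBasis i) W = 0 := by
    intro i hi
    set c : ℂ := hA.eigenvectorBasis.repr V i with hc
    have hVdecomp : V = c • hA.eigenvectorBasis i := by
      conv_lhs => rw [← hA.eigenvectorBasis.sum_repr V]
      rw [Finset.sum_eq_single i]
      · intro j _ hj
        have hz : hA.eigenvectorBasis.repr V j = 0 := by
          rw [OrthonormalBasis.repr_apply_apply]
          apply hEV
          intro hcon
          exact hj (huniq j i hcon hi)
        rw [hz, zero_smul]
      · intro h; exact absurd (Finset.mem_univ i) h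
    have hEi : ‖hA.eigenvectorBasis i‖ = 1 := hA.eigenvectorBasis.orthonormal.1 i
    have hcnorm : ‖c‖ = 1 := by
      have hnv : ‖V‖ = ‖c‖ * ‖hA.eigenvectorBasis i‖ := by
        conv_lhs => rw [hVdecomp]
        exact norm_smul _ _
      rw [hEi, mul_one] at hnv
      rw [← hnv, hVnorm]
    have hc0 : c ≠ 0 := by
      intro h
      rw [h, norm_zero] at hcnorm
      norm_num at hcnorm
    have h5 := hVW
    rw [hVdecomp, inner_smul_left] at h5
    rcases mul_eq_zero.mp h5 with h | h
    · exact absurd h (by simpa using hc0)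
    · exact h
  have hkey : δ * ‖W‖ ≤ ‖Matrix.toEuclideanLin A W - ((lam : ℝ) : ℂ) • W‖ :=
    gap_estimate hA hδ hd halt hperp
  have hyval : Matrix.toEuclideanLin A W - ((lam : ℝ) : ℂ) • W
      = l' • V - toE (B' θ *ᵥ v θ) := by
    rw [hWdef, toEuclideanLin_toE,
      show ((lam : ℝ) : ℂ) • (toE w) = toE (lc • w) from rfl,
      ← toE_sub, hAw, toE_sub, toE_smul, hV]
  have hperpy : inner (𝕜 := ℂ) V (Matrix.toEuclideanLin A W - ((lam : ℝ) : ℂ) • W) = 0 := by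
    rw [inner_sub_right, inner_smul_right]
    have h1 : inner (𝕜 := ℂ) V (Matrix.toEuclideanLin A W) = lc * inner (𝕜 := ℂ) V W := by
      rw [← hsym V W, hTV, inner_smul_left, hlc, Complex.conj_ofReal]
    rw [h1, hVW, hlc]
    ring
  have hyB : ‖Matrix.toEuclideanLin A W - ((lam : ℝ) : ℂ) • W‖ ≤ ‖toE (B' θ *ᵥ v θ)‖ := by
    set y : EuclideanSpace ℂ (Fin n) := Matrix.toEuclideanLin A W - ((lam : ℝ) : ℂ) • W with hy
    have hBv' : toE (B' θ *ᵥ v θ) = l' • V - y := by rw [hyval]; abel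
    have hinner0 : inner (𝕜 := ℂ) (l' • V) y = 0 := by
      rw [inner_smul_left, hperpy, mul_zero]
    have hsq : ‖l' • V - y‖ ^ 2 = ‖l' • V‖ ^ 2 + ‖y‖ ^ 2 := by
      rw [norm_sub_sq (𝕜 := ℂ), hinner0]
      simp
    have h6 : ‖y‖ ^ 2 ≤ ‖toE (B' θ *ᵥ v θ)‖ ^ 2 := by
      rw [hBv', hsq]
      have := sq_nonneg ‖l' • V‖
      linarith
    exact (pow_le_pow_iff_left₀ (norm_nonneg _) (norm_nonneg _) two_ne_zero).mp h6
  have hBv : ‖toE (B' θ *ᵥ v θ)‖ ≤ ‖B' θ‖ := by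
    have h := Matrix.l2_opNorm_mulVec (B' θ) V
    rw [hVnorm, mul_one] at h
    exact h
  have hM : ‖P' θ‖ ≤ 2 * ‖W‖ := by
    have ha' : (starRingEnd ℂ) a = -a := eq_neg_of_add_eq_zero_left hstar_a
    have hPdecomp : P' θ = vecMulVec w (star (v θ)) + (vecMulVec w (star (v θ)))ᴴ := by
      ext i j
      rw [Matrix.add_apply, hP'eq i j, Matrix.conjTranspose_apply, Matrix.vecMulVec_apply,
        Matrix.vecMulVec_apply]
      simp only [Pi.star_apply, RCLike.star_def, _root_.map_mul, Complex.conj_conj]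
      rw [hw]
      simp only [Pi.sub_apply, Pi.smul_apply, smul_eq_mul, map_sub, _root_.map_mul, ha']
      ring
    rw [hPdecomp]
    have hMW : ‖vecMulVec w (star (v θ))‖ ≤ ‖W‖ := by
      have h := vecMulVec_opNorm_le w (v θ)
      rw [← hWdef, ← hV] at h
      rw [hVnorm, mul_one] at h
      exact h
    calc ‖vecMulVec w (star (v θ)) + (vecMulVec w (star (v θ)))ᴴ‖
        ≤ ‖vecMulVec w (star (v θ))‖ + ‖(vecMulVec w (star (v θ)))ᴴ‖ := norm_add_le _ _
      _ = 2 * ‖vecMulVec w (star (v θ))‖ := by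
          rw [Matrix.l2_opNorm_conjTranspose]; ring
      _ ≤ 2 * ‖W‖ := by linarith
  have hWb : ‖W‖ ≤ ‖B' θ‖ / δ := by
    rw [le_div_iff₀ hδ]
    calc ‖W‖ * δ = δ * ‖W‖ := mul_comm _ _
      _ ≤ ‖B' θ‖ := hkey.trans (hyB.trans hBv)
  calc ‖P' θ‖ ≤ 2 * ‖W‖ := hM
    _ ≤ 2 * (‖B' θ‖ / δ) := by linarith
    _ = 2 * ‖B' θ‖ / δ := by ring
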